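/- arXiv:2105.08231 — 12 statements merged into one kernel-verified Lean document; each statement's English description precedes it below -/
import Mathlib

section
/- Let r be a weakly transitive relation on a set W (i.e., for all w, s, t, if r w s and r s t then w = t or r w t). Then the reflexive closure of r coincides with the reflexive-transitive closure of r: for all w, v, Relation.ReflGen r w v holds if and only if Relation.ReflTransGen r w v holds. -/
theorem reflGen_iff_reflTransGen_of_weakly_transitive {W : Type*} (r : W → W → Prop)
    (hwt : ∀ w s t : W, r w s → r s t → w = t ∨ r w t) :
    ∀ w v : W, Relation.ReflGen r w v ↔ Relation.ReflTransGen r w v := by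
  intro w v
  constructor
  · exact Relation.ReflGen.to_reflTransGen
  · intro h
    induction h with
    | refl => exact Relation.ReflGen.refl
    | tail _ hbc ih =>
      cases ih with
      | refl => exact Relation.ReflGen.single hbc
      | single hab =>
        rcases hwt _ _ _ hab hbc with h | h
        · exact h ▸ Relation.ReflGen.refl
        · exact Relation.ReflGen.single h
end

section
/- Let (X, d) be a derivative space, i.e. d : Set X → Set X satisfies d ∅ = ∅, d (A ∪ B) = d A ∪ d B and d (d A) ⊆ A ∪ d A for all A, B ⊆ X. Then for every A ⊆ X, d A = {y | for every U ⊆ X, if y ∉ d (Uᶜ) then U ∩ A is nonempty}. Equivalently, d A is the set of points all of whose d-neighborhoods meet A. -/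
theorem derivative_eq_points_whose_dneighborhoods_meet {X : Type*} (d : Set X → Set X)
    (hempty : d ∅ = ∅)
    (hunion : ∀ A B : Set X, d (A ∪ B) = d A ∪ d B)
    (hweak : ∀ A : Set X, d (d A) ⊆ A ∪ d A) :
    ∀ A : Set X, d A = {y | ∀ U : Set X, y ∉ d Uᶜ → (U ∩ A).Nonempty} := by
  have mono : ∀ {A B : Set X}, A ⊆ B → d A ⊆ d B := by
    intro A B h
    have hAB : A ∪ B = B := Set.union_eq_self_of_subset_left h
    calc d A ⊆ d A ∪ d B := Set.subset_union_left
      _ = d (A ∪ B) := (hunion A B).symm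
      _ = d B := by rw [hAB]
  intro A
  ext y
  constructor
  · intro hy U hU
    by_contra h
    rw [Set.not_nonempty_iff_eq_empty] at h
    have hsub : A ⊆ Uᶜ := by
      intro x hx hxU
      have : x ∈ U ∩ A := ⟨hxU, hx⟩
      simp [h] at this
    exact hU (mono hsub hy)
  · intro hy
    by_contra h
    have := hy Aᶜ (by simpa using h)
    simp at this
end

section
/- Let (X, d) be a derivative space and let N_d(x) := {U ⊆ X | x ∉ d (Uᶜ)} denote the family of d-neighborhoods of x. Then for every x ∈ X: (1) the whole space X belongs to N_d(x); (2) if U ∈ N_d(x) and U ⊆ V then V ∈ N_d(x); (3) if U ∈ N_d(x) and V ∈ N_d(x) then U ∩ V ∈ N_d(x); (4) if x ∈ U and U ∈ N_d(x), then {y | U ∈ N_d(y)} ∈ N_d(x). -/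
theorem dneighborhoods_form_neighborhood_derivative_space {X : Type*} (d : Set X → Set X)
    (hempty : d ∅ = ∅)
    (hunion : ∀ A B : Set X, d (A ∪ B) = d A ∪ d B)
    (hweak : ∀ A : Set X, d (d A) ⊆ A ∪ d A) :
    ∀ x : X,
      (x ∉ d (Set.univ : Set X)ᶜ) ∧
      (∀ U V : Set X, x ∉ d Uᶜ → U ⊆ V → x ∉ d Vᶜ) ∧
      (∀ U V : Set X, x ∉ d Uᶜ → x ∉ d Vᶜ → x ∉ d (U ∩ V)ᶜ) ∧
      (∀ U : Set X, x ∈ U → x ∉ d Uᶜ → x ∉ d ({y | y ∉ d Uᶜ} : Set X)ᶜ) := by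
  have hmono : ∀ A B : Set X, A ⊆ B → d A ⊆ d B := by
    intro A B hAB
    have : d B = d A ∪ d B := by
      rw [← hunion, Set.union_eq_self_of_subset_left hAB]
    rw [this]; exact Set.subset_union_left
  intro x
  refine ⟨?_, ?_, ?_, ?_⟩
  · simp [hempty]
  · intro U V hU hUV hx
    exact hU (hmono _ _ (Set.compl_subset_compl.mpr hUV) hx)
  · intro U V hU hV hx
    rw [Set.compl_inter, hunion] at hx
    rcases hx with h | h
    · exact hU h
    · exact hV h
  · intro U hxU hU hx
    have : ({y | y ∉ d Uᶜ} : Set X)ᶜ = d Uᶜ := by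
      ext y; simp
    rw [this] at hx
    rcases hweak Uᶜ hx with h | h
    · exact h hxU
    · exact hU h
end

section
/- Let (X, d) and (X', d') be derivative spaces and π : X → X' a map. The following are equivalent: (1) π is a d-morphism, i.e. π ⁻¹' (d' B) = d (π ⁻¹' B) for every B ⊆ X'; (2) for every x ∈ X, both the back condition (for every B ⊆ X', if B ∈ N_{d'}(π x) then π ⁻¹' B ∈ N_d(x)) and the forth condition (for every A ⊆ X, if A ∈ N_d(x) then π '' A ∈ N_{d'}(π x)) hold; (3) for every x ∈ X and every B ⊆ X', π ⁻¹' B ∈ N_d(x) if and only if B ∈ N_{d'}(π x). -/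
lemma deriv_mono' {Y : Type*} (d : Set Y → Set Y)
    (hunion : ∀ A B : Set Y, d (A ∪ B) = d A ∪ d B)
    {A B : Set Y} (h : A ⊆ B) : d A ⊆ d B := by
  have : d B = d A ∪ d B := by
    rw [← hunion, Set.union_eq_self_of_subset_left h]
  rw [this]; exact Set.subset_union_left

theorem dmorphism_characterizations {X X' : Type*}
    (d : Set X → Set X) (d' : Set X' → Set X')
    (hempty : d ∅ = ∅) (hunion : ∀ A B : Set X, d (A ∪ B) = d A ∪ d B)
    (hweak : ∀ A : Set X, d (d A) ⊆ A ∪ d A)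
    (hempty' : d' ∅ = ∅) (hunion' : ∀ A B : Set X', d' (A ∪ B) = d' A ∪ d' B)
    (hweak' : ∀ A : Set X', d' (d' A) ⊆ A ∪ d' A)
    (π : X → X') :
    ((∀ B : Set X', π ⁻¹' (d' B) = d (π ⁻¹' B)) ↔
      (∀ x : X,
        (∀ B : Set X', π x ∉ d' Bᶜ → x ∉ d (π ⁻¹' B)ᶜ) ∧
        (∀ A : Set X, x ∉ d Aᶜ → π x ∉ d' (π '' A)ᶜ))) ∧
    ((∀ B : Set X', π ⁻¹' (d' B) = d (π ⁻¹' B)) ↔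
      (∀ (x : X) (B : Set X'), x ∉ d (π ⁻¹' B)ᶜ ↔ π x ∉ d' Bᶜ)) := by
  have key : ∀ B : Set X', (π ⁻¹' B)ᶜ = π ⁻¹' Bᶜ := fun B => rfl
  constructor
  · constructor
    · intro h1 x
      constructor
      · intro B hB hx
        apply hB
        rw [key, ← h1] at hx
        exact hx
      · intro A hA hx
        apply hA
        have h2 : π x ∈ d' (π '' A)ᶜ := hx
        have h3 : x ∈ π ⁻¹' (d' (π '' A)ᶜ) := h2
        rw [h1] at h3
        have hsub : π ⁻¹' (π '' A)ᶜ ⊆ Aᶜ := by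
          intro y hy hyA
          exact hy (Set.mem_image_of_mem π hyA)
        exact deriv_mono' d hunion hsub h3
    · intro h2 B
      ext x
      simp only [Set.mem_preimage]
      constructor
      · intro hx
        by_contra hc
        have forth := (h2 x).2 (π ⁻¹' B)ᶜ (by rwa [compl_compl])
        apply forth
        have hsub : d' B ⊆ d' (π '' (π ⁻¹' B)ᶜ)ᶜ := by
          apply deriv_mono' d' hunion'
          intro y hy hyc
          obtain ⟨z, hz, hzy⟩ := hyc
          rw [key] at hz
          exact hz (by rwa [hzy])
        exact hsub hx
      · intro hx
        by_contra hc
        have back := (h2 x).1 Bᶜ (by rwa [compl_compl])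
        rw [key, compl_compl] at back
        exact back hx
  · constructor
    · intro h1 x B
      rw [key, ← h1]
      exact Iff.rfl
    · intro h3 B
      ext x
      simp only [Set.mem_preimage]
      have := h3 x Bᶜ
      rw [key] at this
      simp only [compl_compl] at this
      constructor
      · intro hx
        by_contra hc
        exact (this.mp hc) hx
      · intro hx
        by_contra hc
        exact (this.mpr hc) hx
end

section
/- Let X be a topological space, r a weakly transitive relation on a set W, and π : X → W a map. Then π satisfies π ⁻¹' {w | ∃ v, r w v ∧ v ∈ A} = derivedSet (π ⁻¹' A) for every A ⊆ W if and only if for every x ∈ X both of the following hold: (i) there exists an open set U with x ∈ U such that for every y ∈ U with y ≠ x, r (π x) (π y); and (ii) for every open set U with x ∈ U and every v ∈ W with r (π x) v, there exists y ∈ U with y ≠ x and π y = v. -/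
theorem dmorphism_to_kripke_frame_iff_back_and_forth {X W : Type*} [TopologicalSpace X]
    (r : W → W → Prop)
    (hwt : ∀ w s t : W, r w s → r s t → w = t ∨ r w t)
    (π : X → W) :
    (∀ A : Set W, π ⁻¹' {w | ∃ v, r w v ∧ v ∈ A} = derivedSet (π ⁻¹' A)) ↔
    (∀ x : X,
      (∃ U : Set X, IsOpen U ∧ x ∈ U ∧ ∀ y ∈ U, y ≠ x → r (π x) (π y)) ∧
      (∀ U : Set X, IsOpen U → x ∈ U → ∀ v : W, r (π x) v →
        ∃ y ∈ U, y ≠ x ∧ π y = v)) := by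
  constructor
  · intro h x
    constructor
    · -- use A = {v | ¬ r (π x) v}
      have hx : x ∉ derivedSet (π ⁻¹' {v | ¬ r (π x) v}) := by
        rw [← h]
        rintro ⟨v, hv, hv'⟩
        exact hv' hv
      rw [mem_derivedSet, accPt_iff_nhds] at hx
      push_neg at hx
      obtain ⟨U, hU, hx⟩ := hx
      obtain ⟨V, hVU, hVopen, hxV⟩ := mem_nhds_iff.mp hU
      refine ⟨V, hVopen, hxV, fun y hy hyx => ?_⟩
      by_contra hr
      exact hyx (hx y ⟨hVU hy, hr⟩)
    · intro U hUopen hxU v hv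
      have hx : x ∈ derivedSet (π ⁻¹' {v}) := by
        rw [← h]; exact ⟨v, hv, rfl⟩
      rw [mem_derivedSet, accPt_iff_nhds] at hx
      obtain ⟨y, ⟨hyU, hyv⟩, hyx⟩ := hx U (hUopen.mem_nhds hxU)
      exact ⟨y, hyU, hyx, hyv⟩
  · intro h A
    ext x
    simp only [Set.mem_preimage, Set.mem_setOf_eq, mem_derivedSet, accPt_iff_nhds]
    constructor
    · rintro ⟨v, hrv, hvA⟩ U hU
      obtain ⟨V, hVU, hVopen, hxV⟩ := mem_nhds_iff.mp hU
      obtain ⟨y, hyV, hyx, hyv⟩ := (h x).2 V hVopen hxV v hrv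
      exact ⟨y, ⟨hVU hyV, by simp [hyv, hvA]⟩, hyx⟩
    · intro hx
      obtain ⟨V, hVopen, hxV, hV⟩ := (h x).1
      obtain ⟨y, ⟨hyV, hyA⟩, hyx⟩ := hx V (hVopen.mem_nhds hxV)
      exact ⟨π y, hV y hyV hyx, hyA⟩
end

section
/- Let r be a weakly transitive relation on a set W. Define the depth dpt(w) ∈ ℕ∞ of a point w as the supremum of the set of n ∈ ℕ for which there exists a strict chain w = w₀, w₁, …, w_n with r w_i w_{i+1} and ¬ r w_{i+1} w_i for all i < n. Then for all w, s ∈ W: (1) if w = s or r w s, then dpt(s) ≤ dpt(w); (2) if r w s and r s w, then dpt(w) = dpt(s); (3) if r w s, dpt(w) = dpt(s), and dpt(w) < ⊤, then r s w; (4) if r w s, ¬ r s w, and dpt(s) < ⊤, then dpt(s) < dpt(w). -/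
/-- The depth of a point `w`: the supremum (in `ℕ∞`) of the lengths `n` of strict chains
`w = w₀ → w₁ → ⋯ → w_n` (where each step satisfies `r wᵢ wᵢ₊₁` and `¬ r wᵢ₊₁ wᵢ`). -/
noncomputable def dpt {W : Type*} (r : W → W → Prop) (w : W) : ℕ∞ :=
  sSup {e : ℕ∞ | ∃ n : ℕ, e = (n : ℕ∞) ∧
    ∃ f : ℕ → W, f 0 = w ∧ ∀ i < n, r (f i) (f (i + 1)) ∧ ¬ r (f (i + 1)) (f i)}

def StrictChain {W : Type*} (r : W → W → Prop) (w : W) (n : ℕ) : Prop :=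
  ∃ f : ℕ → W, f 0 = w ∧ ∀ i < n, r (f i) (f (i + 1)) ∧ ¬ r (f (i + 1)) (f i)

lemma dpt_eq {W : Type*} (r : W → W → Prop) (w : W) :
    dpt r w = sSup {e : ℕ∞ | ∃ n : ℕ, e = (n : ℕ∞) ∧ StrictChain r w n} := rfl

lemma strictChain_zero {W : Type*} (r : W → W → Prop) (w : W) : StrictChain r w 0 :=
  ⟨fun _ => w, rfl, fun i h => absurd h (Nat.not_lt_zero i)⟩

lemma strictChain_mono {W : Type*} {r : W → W → Prop} {w : W} {n k : ℕ} (hk : k ≤ n)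
    (h : StrictChain r w n) : StrictChain r w k := by
  obtain ⟨f, h0, hf⟩ := h
  exact ⟨f, h0, fun i hi => hf i (lt_of_lt_of_le hi hk)⟩

lemma strictChain_of_rel {W : Type*} {r : W → W → Prop}
    (hwt : ∀ w s t : W, r w s → r s t → w = t ∨ r w t)
    {w s : W} (hws : r w s) {n : ℕ} (h : StrictChain r s n) :
    StrictChain r w n := by
  obtain ⟨f, h0, hf⟩ := h
  refine ⟨fun i => if i = 0 then w else f i, by simp, fun i hi => ?_⟩
  rcases Nat.eq_zero_or_pos i with rfl | hpos
  · simp only [if_pos rfl, if_neg Nat.one_ne_zero]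
    have h1 := hf 0 hi
    rw [h0] at h1
    constructor
    · rcases hwt w s (f 1) hws h1.1 with heq | hr
      · rw [← heq] at h1
        exact absurd hws h1.2
      · exact hr
    · intro hr
      rcases hwt (f 1) w s hr hws with heq | hr2
      · rw [heq] at h1
        exact h1.2 h1.1
      · exact h1.2 hr2
  · have hne : i ≠ 0 := Nat.pos_iff_ne_zero.mp hpos
    simp only [if_neg hne, if_neg (Nat.succ_ne_zero i)]
    exact hf i hi

lemma strictChain_extend {W : Type*} {r : W → W → Prop} {w s : W}
    (hws : r w s) (hsw : ¬ r s w) {n : ℕ} (h : StrictChain r s n) :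
    StrictChain r w (n + 1) := by
  obtain ⟨f, h0, hf⟩ := h
  refine ⟨fun i => if i = 0 then w else f (i - 1), by simp, fun i hi => ?_⟩
  rcases Nat.eq_zero_or_pos i with rfl | hpos
  · simp [h0, hws, hsw]
  · have hne : i ≠ 0 := Nat.pos_iff_ne_zero.mp hpos
    simp only [if_neg hne, if_neg (Nat.succ_ne_zero i)]
    have h2 : i + 1 - 1 = (i - 1) + 1 := by omega
    rw [h2]
    exact hf (i - 1) (by omega)

lemma dpt_attained {W : Type*} (r : W → W → Prop) (w : W) (h : dpt r w ≠ ⊤) :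
    ∃ m : ℕ, dpt r w = (m : ℕ∞) ∧ StrictChain r w m := by
  obtain ⟨m, hm⟩ := WithTop.ne_top_iff_exists.mp h
  refine ⟨m, hm.symm, ?_⟩
  by_contra hc
  rcases Nat.eq_zero_or_pos m with rfl | hpos
  · exact hc (strictChain_zero r w)
  · have hle : dpt r w ≤ ((m - 1 : ℕ) : ℕ∞) := by
      rw [dpt_eq]
      apply sSup_le
      rintro e ⟨n, rfl, hch⟩
      have hn : n < m := by
        by_contra hn
        exact hc (strictChain_mono (le_of_not_gt hn) hch)
      exact_mod_cast Nat.le_sub_one_of_lt hn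
    rw [← hm] at hle
    have : (m : ℕ∞) ≤ ((m - 1 : ℕ) : ℕ∞) := hle
    have : m ≤ m - 1 := by exact_mod_cast this
    omega

theorem depth_properties {W : Type*} (r : W → W → Prop)
    (hwt : ∀ w s t : W, r w s → r s t → w = t ∨ r w t) :
    ∀ w s : W,
      ((w = s ∨ r w s) → dpt r s ≤ dpt r w) ∧
      (r w s → r s w → dpt r w = dpt r s) ∧
      (r w s →  dpt r w = dpt r s → dpt r w < ⊤ → r s w) ∧
      (r w s → ¬ r s w → dpt r s < ⊤ → dpt r s < dpt r w) := by
  have key : ∀ a b : W, r a b → dpt r b ≤ dpt r a := by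
    intro a b hab
    rw [dpt_eq r a, dpt_eq r b]
    apply sSup_le
    rintro e ⟨n, rfl, hch⟩
    exact le_sSup ⟨n, rfl, strictChain_of_rel hwt hab hch⟩
  have key2 : ∀ a b : W, r a b → ¬ r b a → dpt r b < ⊤ → dpt r b < dpt r a := by
    intro a b hab hba htop
    obtain ⟨m, hm, hch⟩ := dpt_attained r b htop.ne
    have hle : ((m + 1 : ℕ) : ℕ∞) ≤ dpt r a := by
      rw [dpt_eq r a]
      exact le_sSup ⟨m + 1, rfl, strictChain_extend hab hba hch⟩
    calc dpt r b = (m : ℕ∞) := hm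
      _ < ((m + 1 : ℕ) : ℕ∞) := by exact_mod_cast Nat.lt_succ_self m
      _ ≤ dpt r a := hle
  intro w s
  refine ⟨?_, ?_, ?_, ?_⟩
  · rintro (rfl | h)
    · exact le_rfl
    · exact key w s h
  · intro h1 h2
    exact le_antisymm (key s w h2) (key w s h1)
  · intro h1 h2 h3
    by_contra hsw
    rw [h2] at h3
    have := key2 w s h1 hsw h3
    rw [h2] at this
    exact lt_irrefl _ this
  · exact fun h1 h2 h3 => key2 w s h1 h2 h3
end

section
/- Let r be a weakly transitive relation on a set W and let V : ι → Set W be a valuation indexed by an arbitrary type ι. Then there exist a set W', a relation r' on W' that is weakly transitive and irreflexive, a valuation V' : ι → Set W', and a surjective map π : W' → W such that: (i) for all x, y ∈ W', r' x y implies r (π x) (π y); (ii) for all x ∈ W' and v ∈ W, if r (π x) v then there exists y ∈ W' with r' x y and π y = v; and (iii) V' i = π ⁻¹' (V i) for every i. Moreover, if W is finite then W' can be chosen finite. -/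
universe u v

theorem irreflexive_unraveling {W : Type u} {ι : Type v} (r : W → W → Prop)
    (hwt : ∀ w s t : W, r w s → r s t → w = t ∨ r w t)
    (V : ι → Set W) :
    ∃ (W' : Type u) (r' : W' → W' → Prop) (V' : ι → Set W') (π : W' → W),
      (∀ w s t : W', r' w s → r' s t → w = t ∨ r' w t) ∧
      (∀ w : W', ¬ r' w w) ∧
      Function.Surjective π ∧
      (∀ x y : W', r' x y → r (π x) (π y)) ∧
      (∀ (x : W') (v : W), r (π x) v → ∃ y : W', r' x y ∧ π y = v) ∧
      (∀ i : ι, V' i = π ⁻¹' (V i)) ∧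
      (Finite W → Finite W') := by
  classical
  refine ⟨{p : W × Bool // p.2 = false ∨ r p.1 p.1},
    fun x y => r x.1.1 y.1.1 ∧ x ≠ y, fun i => (fun x => x.1.1) ⁻¹' (V i),
    fun x => x.1.1, ?_, ?_, ?_, ?_, ?_, fun i => rfl, ?_⟩
  · rintro ⟨⟨w, b⟩, hw⟩ ⟨⟨s, c⟩, hs⟩ ⟨⟨t, d⟩, ht⟩ ⟨h1, hne1⟩ ⟨h2, hne2⟩
    rcases hwt w s t h1 h2 with rfl | hwtt
    · by_cases heq : (⟨⟨w, b⟩, hw⟩ : {p : W × Bool // p.2 = false ∨ r p.1 p.1}) =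
        ⟨⟨w, d⟩, ht⟩
      · exact Or.inl heq
      · have hbd : b ≠ d := by
          intro h; subst h; exact heq rfl
        have hrw : r w w := by
          rcases hw with hb | hr
          · rcases ht with hd | hr
            · exact absurd (hb.trans hd.symm) hbd
            · exact hr
          · exact hr
        exact Or.inr ⟨hrw, heq⟩
    · by_cases heq : (⟨⟨w, b⟩, hw⟩ : {p : W × Bool // p.2 = false ∨ r p.1 p.1}) =
        ⟨⟨t, d⟩, ht⟩
      · exact Or.inl heq
      · exact Or.inr ⟨hwtt, heq⟩
  · rintro x ⟨-, hne⟩; exact hne rfl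
  · intro w; exact ⟨⟨⟨w, false⟩, Or.inl rfl⟩, rfl⟩
  · rintro x y ⟨h, -⟩; exact h
  · rintro ⟨⟨w, b⟩, hw⟩ v hv
    by_cases hvw : v = w
    · subst hvw
      refine ⟨⟨⟨v, !b⟩, Or.inr hv⟩, ⟨hv, ?_⟩, rfl⟩
      intro h
      have : b = !b := congrArg (fun x => x.1.2) h
      simp at this
    · refine ⟨⟨⟨v, false⟩, Or.inl rfl⟩, ⟨hv, ?_⟩, rfl⟩
      intro h
      exact hvw (congrArg (fun x => x.1.1) h).symm
  · intro hW
    have : Finite (W × Bool) := Finite.instProd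
    exact Subtype.finite
end

section
/- Let r be a weakly transitive relation on a set W. Then there exist a type X, a topology on X, and a surjective map π : X → W such that π is a d-morphism from the Cantor derivative to the relational derivative: for every A ⊆ W, derivedSet (π ⁻¹' A) = π ⁻¹' {w | ∃ v, r w v ∧ v ∈ A}. -/
universe u

theorem exists_topological_dmorphism_onto_wK4_frame {W : Type u} (r : W → W → Prop)
    (hwt : ∀ w s t : W, r w s → r s t → w = t ∨ r w t) :
    ∃ (X : Type u) (t : TopologicalSpace X) (π : X → W),
      Function.Surjective π ∧
      ∀ A : Set W,
        @derivedSet X t (π ⁻¹' A) = π ⁻¹' {w | ∃ v, r w v ∧ v ∈ A} := by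
  classical
  -- the upset (Alexandrov) topology on W
  let tW : TopologicalSpace W :=
    { IsOpen := fun U => ∀ w ∈ U, ∀ v, r w v → v ∈ U
      isOpen_univ := fun _ _ _ _ => trivial
      isOpen_inter := fun U V hU hV w hw v hv => ⟨hU w hw.1 v hv, hV w hw.2 v hv⟩
      isOpen_sUnion := fun S hS w hw v hv => by
        obtain ⟨U, hUS, hwU⟩ := hw
        exact ⟨U, hUS, hS U hUS w hwU v hv⟩ }
  let X : Type u := {p : W × Bool // p.2 = true → r p.1 p.1}
  letI tX : TopologicalSpace X := TopologicalSpace.induced (fun x => x.1.1) tW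
  let π : X → W := fun x => x.1.1
  refine ⟨X, tX, π, ?_, ?_⟩
  · intro w
    exact ⟨⟨(w, false), by simp⟩, rfl⟩
  intro A
  ext x
  have hmem : x ∈ @derivedSet X tX (π ⁻¹' A) ↔
      x ∈ @closure X tX ((π ⁻¹' A) \ {x}) := by
    rw [mem_derivedSet, accPt_principal_iff_clusterPt, ← mem_closure_iff_clusterPt]
  rw [hmem, mem_closure_iff]
  simp only [Set.mem_preimage, Set.mem_setOf_eq]
  constructor
  · -- use the minimal open set around x.1.1
    intro h
    have hUw : @IsOpen W tW {v | x.1.1 = v ∨ r x.1.1 v} := by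
      intro v hv u hu
      rcases hv with rfl | hv
      · exact Or.inr hu
      · exact (hwt x.1.1 v u hv hu).imp id id
    have hopen : @IsOpen X tX (π ⁻¹' {v | x.1.1 = v ∨ r x.1.1 v}) := ⟨_, hUw, rfl⟩
    obtain ⟨y, hyU, hyA, hyx⟩ := h _ hopen (Or.inl rfl)
    have hyA' : y.1.1 ∈ A := hyA
    have hyx' : y ≠ x := hyx
    rcases (hyU : x.1.1 = y.1.1 ∨ r x.1.1 y.1.1) with heq | hr
    · -- y projects to x.1.1; since y ≠ x, the two copies differ in the Bool, so reflexive
      refine ⟨x.1.1, ?_, heq ▸ hyA'⟩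
      have hne : y.1.2 ≠ x.1.2 := fun hbb =>
        hyx' (Subtype.ext (Prod.ext heq.symm hbb))
      have hrefl : r x.1.1 x.1.1 := by
        by_cases hyt : y.1.2 = true
        · have h2 := y.2 hyt
          have h3 : x.1.1 = y.1.1 := heq
          rw [h3]
          exact h2
        · by_cases hxt : x.1.2 = true
          · exact x.2 hxt
          · rw [Bool.not_eq_true] at hyt hxt
            exact absurd (hyt.trans hxt.symm) hne
      exact hrefl
    · exact ⟨y.1.1, hr, hyA'⟩
  · -- r x.1.1 v with v ∈ A gives accumulation
    rintro ⟨v, hwv, hvA⟩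
    intro U hU hxU
    obtain ⟨V, hV, rfl⟩ := hU
    have hvV : v ∈ V := hV x.1.1 hxU v hwv
    by_cases hvw : v = x.1.1
    · -- use the other copy of x.1.1 (which exists since r x.1.1 x.1.1)
      have hrefl : r v v := by rw [hvw]; rw [hvw] at hwv; exact hwv
      refine ⟨⟨(v, !x.1.2), fun _ => hrefl⟩, ?_, hvA, ?_⟩
      · exact hvV
      · intro hmem'
        have h1 : (⟨(v, !x.1.2), fun _ => hrefl⟩ : X) = x := hmem'
        have hb : (!x.1.2) = x.1.2 := congrArg (fun z : X => z.1.2) h1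
        simp at hb
    · refine ⟨⟨(v, false), by simp⟩, hvV, hvA, ?_⟩
      intro hmem'
      have h1 : (⟨(v, false), by simp⟩ : X) = x := hmem'
      exact hvw (congrArg (fun z : X => z.1.1) h1)
end

section
/- Let r be a weakly transitive relation on a set W that additionally satisfies the wK4T₀ condition: for all w, v, if r w v and r v w then r w w or r v v. Then there exist a type X, a T₀ topology on X, and a surjective map π : X → W such that for every A ⊆ W, derivedSet (π ⁻¹' A) = π ⁻¹' {w | ∃ v, r w v ∧ v ∈ A}. -/
universe u

namespace WK4T0Proof

open Set TopologicalSpace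

variable {W : Type u} (r : W → W → Prop)

/-- two points in a common cluster -/
def clr (w v : W) : Prop := r w v ∧ r v w

/-- strictly later fiber -/
def later (w v : W) : Prop := r w v ∧ ¬ r v w

/-- all cluster partners are reflexive -/
def Pw (w : W) : Prop := ∀ v, clr r w v → r v v

/-- the space: pairs (w, q); copies of irreflexive points with partners sit at
integer coordinates -/
def Xsp := {p : W × ℚ // (¬ r p.1 p.1 ∧ ∃ v, clr r p.1 v) → ((⌈p.2⌉ : ℚ) = p.2)}

/-- anchor coordinate -/
def anc (q : ℚ) : ℚ := ((⌈q⌉ - 1 : ℤ) : ℚ)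

def NA (x : Xsp r) (p : ℚ) : Set (Xsp r) :=
  {y | y = x ∨ (clr r x.1.1 y.1.1 ∧ p < y.1.2 ∧ y.1.2 < x.1.2) ∨ later r x.1.1 y.1.1}

def NB (x : Xsp r) : Set (Xsp r) :=
  {y | y = x ∨ (clr r x.1.1 y.1.1 ∧ ¬ r y.1.1 y.1.1 ∧ y.1.2 = anc x.1.2)
      ∨ (clr r x.1.1 y.1.1 ∧ r y.1.1 y.1.1 ∧ anc x.1.2 < y.1.2 ∧ y.1.2 < x.1.2)
      ∨ later r x.1.1 y.1.1}

def NC (x : Xsp r) (p : ℚ) : Set (Xsp r) :=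
  {y | y = x ∨ (clr r x.1.1 y.1.1 ∧ r y.1.1 y.1.1 ∧ x.1.2 < y.1.2 ∧ y.1.2 < p)
      ∨ later r x.1.1 y.1.1}

def ND (x : Xsp r) : Set (Xsp r) := {y | y = x ∨ later r x.1.1 y.1.1}

open Classical in
/-- the canonical neighborhood family of a point -/
noncomputable def fam (x : Xsp r) : Set (Set (Xsp r)) :=
  if r x.1.1 x.1.1 then
    if Pw r x.1.1 then {N | ∃ p, p < x.1.2 ∧ N = NA r x p} else {NB r x}
  else if ∃ v, clr r x.1.1 v then {N | ∃ p, x.1.2 < p ∧ p ≤ x.1.2 + 1 ∧ N = NC r x p}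
  else {ND r x}

section Lemmas

variable {r}

lemma clr_symm {w v : W} (h : clr r w v) : clr r v w := ⟨h.2, h.1⟩

lemma clr_trans (hwt : ∀ w s t : W, r w s → r s t → w = t ∨ r w t) {w v u : W} (h1 : clr r w v) (h2 : clr r v u) : w = u ∨ clr r w u := by
  rcases hwt w v u h1.1 h2.1 with h | h
  · exact Or.inl h
  rcases hwt u v w h2.2 h1.2 with h' | h'
  · exact Or.inl h'.symm
  · exact Or.inr ⟨h, h'⟩

lemma clr_trans' (hwt : ∀ w s t : W, r w s → r s t → w = t ∨ r w t) {w v u : W} (hww : r w w) (h1 : clr r w v) (h2 : clr r v u) :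
    clr r w u := by
  rcases clr_trans hwt h1 h2 with h | h
  · subst h; exact ⟨hww, hww⟩
  · exact h

lemma later_trans (hwt : ∀ w s t : W, r w s → r s t → w = t ∨ r w t) {w v u : W} (h1 : later r w v) (h2 : later r v u) : later r w u := by
  constructor
  · rcases hwt w v u h1.1 h2.1 with h | h
    · exact absurd (h ▸ h2.1) h1.2
    · exact h
  · intro huw
    rcases hwt v u w h2.1 huw with h | h
    · exact h1.2 (h ▸ h1.1)
    · exact h1.2 h

lemma later_clr (hwt : ∀ w s t : W, r w s → r s t → w = t ∨ r w t) {w v u : W} (h1 : later r w v) (h2 : clr r v u) : later r w u := by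
  constructor
  · rcases hwt w v u h1.1 h2.1 with h | h
    · subst h; exact absurd h2.1 h1.2
    · exact h
  · intro huw
    rcases hwt v u w h2.1 huw with h | h
    · subst h; exact absurd h1.1 h1.2
    · exact absurd h h1.2

lemma clr_later (hwt : ∀ w s t : W, r w s → r s t → w = t ∨ r w t) {w v u : W} (h1 : clr r w v) (h2 : later r v u) : later r w u := by
  constructor
  · rcases hwt w v u h1.1 h2.1 with h | h
    · subst h; exact absurd h1.1 h2.2
    · exact h
  · intro huw
    rcases hwt u w v huw h1.1 with h | h
    · subst h; exact absurd h2.1 h2.2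
    · exact absurd h h2.2

lemma irr_unique (hwt : ∀ w s t : W, r w s → r s t → w = t ∨ r w t)
    (hT0 : ∀ w v : W, r w v → r v w → r w w ∨ r v v) {v a b : W} (h1 : clr r v a) (ha : ¬ r a a) (h2 : clr r v b)
    (hb : ¬ r b b) : a = b := by
  rcases clr_trans hwt (clr_symm h1) h2 with h | h
  · exact h
  · rcases hT0 a b h.1 h.2 with h' | h'
    · exact absurd h' ha
    · exact absurd h' hb

lemma anc_lt (q : ℚ) : anc q < q := by
  have := Int.ceil_lt_add_one (R := ℚ) q
  unfold anc
  push_cast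
  linarith

lemma le_anc_add_one (q : ℚ) : q ≤ anc q + 1 := by
  have := Int.le_ceil (α := ℚ) q
  unfold anc
  push_cast
  linarith

lemma anc_eq {s q : ℚ} (h1 : anc q < s) (h2 : s ≤ q) : anc s = anc q := by
  have hle : ⌈s⌉ ≤ ⌈q⌉ := Int.ceil_le_ceil h2
  have hlt : (⌈q⌉ - 1 : ℤ) < ⌈s⌉ := by
    rw [Int.lt_ceil]
    exact_mod_cast h1
  unfold anc
  have : ⌈s⌉ = ⌈q⌉ := by omega
  rw [this]

lemma anc_int {q t : ℚ} (hq : (⌈q⌉ : ℚ) = q) (h1 : q < t) (h2 : t ≤ q + 1) :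
    anc t = q := by
  have hlt : ⌈q⌉ < ⌈t⌉ := by
    rw [Int.lt_ceil, hq]; exact h1
  have hle : ⌈t⌉ ≤ ⌈q⌉ + 1 := by
    rw [Int.ceil_le]
    push_cast
    rw [hq]
    exact h2
  have : ⌈t⌉ = ⌈q⌉ + 1 := by omega
  unfold anc
  rw [this]
  push_cast
  rw [hq]
  ring

lemma ceil_anc (q : ℚ) : (⌈anc q⌉ : ℚ) = anc q := by
  unfold anc
  rw [Int.ceil_intCast]

/-- every member of every canonical set is either the center, a cluster partner,
or strictly later -/
lemma mem_shape {x y : Xsp r} {N : Set (Xsp r)} (hN : N ∈ fam r x) (hy : y ∈ N) :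
    y = x ∨ clr r x.1.1 y.1.1 ∨ later r x.1.1 y.1.1 := by
  unfold fam at hN
  split_ifs at hN with h1 h2 h3
  · obtain ⟨p, _, rfl⟩ := hN
    rcases hy with h | h | h
    · exact Or.inl h
    · exact Or.inr (Or.inl h.1)
    · exact Or.inr (Or.inr h)
  · rw [mem_singleton_iff] at hN; subst hN
    rcases hy with h | h | h | h
    · exact Or.inl h
    · exact Or.inr (Or.inl h.1)
    · exact Or.inr (Or.inl h.1)
    · exact Or.inr (Or.inr h)
  · obtain ⟨p, _, _, rfl⟩ := hN
    rcases hy with h | h | h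
    · exact Or.inl h
    · exact Or.inr (Or.inl h.1)
    · exact Or.inr (Or.inr h)
  · rw [mem_singleton_iff] at hN; subst hN
    rcases hy with h | h
    · exact Or.inl h
    · exact Or.inr (Or.inr h)

lemma x_mem {x : Xsp r} {N : Set (Xsp r)} (hN : N ∈ fam r x) : x ∈ N := by
  unfold fam at hN
  split_ifs at hN
  · obtain ⟨p, _, rfl⟩ := hN; exact Or.inl rfl
  · rw [mem_singleton_iff] at hN; subst hN; exact Or.inl rfl
  · obtain ⟨p, _, _, rfl⟩ := hN; exact Or.inl rfl
  · rw [mem_singleton_iff] at hN; subst hN; exact Or.inl rfl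

lemma fam_nonempty (x : Xsp r) : (fam r x).Nonempty := by
  unfold fam
  split_ifs with h1 h2 h3
  · exact ⟨NA r x (x.1.2 - 1), ⟨x.1.2 - 1, by linarith, rfl⟩⟩
  · exact ⟨NB r x, rfl⟩
  · exact ⟨NC r x (x.1.2 + 1), ⟨x.1.2 + 1, by linarith, le_refl _, rfl⟩⟩
  · exact ⟨ND r x, rfl⟩

/-- points in a strictly later fiber have all their canonical sets inside the
later region -/
lemma later_sub (hwt : ∀ w s t : W, r w s → r s t → w = t ∨ r w t) {w : W} {y z : Xsp r} {N' : Set (Xsp r)} (hl : later r w y.1.1)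
    (hN' : N' ∈ fam r y) (hz : z ∈ N') : later r w z.1.1 := by
  rcases mem_shape hN' hz with h | h | h
  · subst h; exact hl
  · exact later_clr hwt hl h
  · exact later_trans hwt hl h

lemma NA_mono {x : Xsp r} {p1 p2 : ℚ} (h : p1 ≤ p2) : NA r x p2 ⊆ NA r x p1 := by
  rintro z (h' | h' | h')
  · exact Or.inl h'
  · exact Or.inr (Or.inl ⟨h'.1, lt_of_le_of_lt h h'.2.1, h'.2.2⟩)
  · exact Or.inr (Or.inr h')

lemma NC_mono {x : Xsp r} {p1 p2 : ℚ} (h : p1 ≤ p2) : NC r x p1 ⊆ NC r x p2 := by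
  rintro z (h' | h' | h')
  · exact Or.inl h'
  · exact Or.inr (Or.inl ⟨h'.1, h'.2.1, h'.2.2.1, lt_of_lt_of_le h'.2.2.2 h⟩)
  · exact Or.inr (Or.inr h')

lemma fam_directed {x : Xsp r} {N1 N2 : Set (Xsp r)} (h1 : N1 ∈ fam r x)
    (h2 : N2 ∈ fam r x) : ∃ N3 ∈ fam r x, N3 ⊆ N1 ∩ N2 := by
  unfold fam at h1 h2 ⊢
  split_ifs at h1 h2 ⊢ with hr hP hpart
  · obtain ⟨p1, hp1, rfl⟩ := h1
    obtain ⟨p2, hp2, rfl⟩ := h2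
    exact ⟨NA r x (max p1 p2), ⟨max p1 p2, max_lt hp1 hp2, rfl⟩,
      subset_inter (NA_mono (le_max_left _ _)) (NA_mono (le_max_right _ _))⟩
  · rw [mem_singleton_iff] at h1 h2; subst h1; subst h2
    exact ⟨NB r x, rfl, subset_inter (subset_refl _) (subset_refl _)⟩
  · obtain ⟨p1, hp1, hp1', rfl⟩ := h1
    obtain ⟨p2, hp2, hp2', rfl⟩ := h2
    exact ⟨NC r x (min p1 p2), ⟨min p1 p2, lt_min hp1 hp2,
      le_trans (min_le_left _ _) hp1', rfl⟩,
      subset_inter (NC_mono (min_le_left _ _)) (NC_mono (min_le_right _ _))⟩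
  · rw [mem_singleton_iff] at h1 h2; subst h1; subst h2
    exact ⟨ND r x, rfl, subset_inter (subset_refl _) (subset_refl _)⟩

/-- a convenient element of the space at coordinate 0 -/
def mk0 (v : W) : Xsp r := ⟨(v, 0), fun _ => by norm_num⟩

/-- element at a coordinate, for a reflexive fiber -/
def mkR (v : W) (t : ℚ) (hv : r v v) : Xsp r := ⟨(v, t), fun h => absurd hv h.1⟩

/-- element at an anchor coordinate -/
def mkA (v : W) (q : ℚ) : Xsp r := ⟨(v, anc q), fun _ => ceil_anc q⟩

/-- the key regularity lemma: each member of a canonical set has a canonical set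
inside it -/
lemma regularity (hwt : ∀ w s t : W, r w s → r s t → w = t ∨ r w t)
    (hT0 : ∀ w v : W, r w v → r v w → r w w ∨ r v v) {x : Xsp r} {N : Set (Xsp r)} (hN : N ∈ fam r x) :
    ∀ y ∈ N, ∃ N' ∈ fam r y, N' ⊆ N := by
  intro y hy
  by_cases hxy : y = x
  · subst hxy; exact ⟨N, hN, subset_refl _⟩
  unfold fam at hN
  split_ifs at hN with hr hP hpart
  -- Case C2 : reflexive, all partners reflexive
  · obtain ⟨p, hp, rfl⟩ := hN
    rcases hy with h | ⟨hcl, hpt, htq⟩ | hl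
    · exact absurd h hxy
    · -- interval member
      have hvv : r y.1.1 y.1.1 := hP _ hcl
      have hPv : Pw r y.1.1 := by
        intro u hu
        rcases clr_trans hwt hcl hu with h | h
        · exact h ▸ hr
        · exact hP _ h
      refine ⟨NA r y p, ?_, ?_⟩
      · unfold fam
        rw [if_pos hvv, if_pos hPv]
        exact ⟨p, hpt, rfl⟩
      · rintro z (h' | ⟨hcl2, hp2, hlt2⟩ | h')
        · exact Or.inr (Or.inl (h' ▸ ⟨hcl, hpt, htq⟩))
        · exact Or.inr (Or.inl ⟨clr_trans' hwt hr hcl hcl2, hp2, lt_trans hlt2 htq⟩)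
        · exact Or.inr (Or.inr (clr_later hwt hcl h'))
    · -- later member
      obtain ⟨N', hN'⟩ := fam_nonempty y
      exact ⟨N', hN', fun z hz => Or.inr (Or.inr (later_sub hwt hl hN' hz))⟩
  -- Case C3 : reflexive, an irreflexive partner exists
  · rw [mem_singleton_iff] at hN; subst hN
    rw [Pw, not_forall] at hP
    obtain ⟨i, hiP⟩ := hP
    rw [_root_.not_imp] at hiP
    obtain ⟨hcli, hirri⟩ := hiP
    rcases hy with h | ⟨hcl, hirr, hpos⟩ | ⟨hcl, hrv, h1, h2⟩ | hl
    · exact absurd h hxy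
    · -- anchor member : irreflexive with partner
      refine ⟨NC r y (min x.1.2 (y.1.2 + 1)), ?_, ?_⟩
      · unfold fam
        rw [if_neg hirr, if_pos ⟨x.1.1, clr_symm hcl⟩]
        refine ⟨min x.1.2 (y.1.2 + 1), lt_min ?_ (by linarith), min_le_right _ _, rfl⟩
        · rw [hpos]; exact anc_lt _
      · rintro z (h' | ⟨hcl2, hrz, ha, hb⟩ | h')
        · exact h' ▸ Or.inr (Or.inl ⟨hcl, hirr, hpos⟩)
        · refine Or.inr (Or.inr (Or.inl ⟨clr_trans' hwt hr hcl hcl2, hrz, ?_, ?_⟩))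
          · rw [← hpos]; exact ha
          · exact lt_of_lt_of_le hb (min_le_left _ _)
        · exact Or.inr (Or.inr (Or.inr (clr_later hwt hcl h')))
    · -- interval member : reflexive, has irreflexive partner i
      have hcvi : clr r y.1.1 i := by
        rcases clr_trans hwt (clr_symm hcl) hcli with h | h
        · exact absurd (h ▸ hrv) hirri
        · exact h
      have hPv : ¬ Pw r y.1.1 := fun h => hirri (h i hcvi)
      have hanc : anc y.1.2 = anc x.1.2 := anc_eq h1 (le_of_lt h2)
      refine ⟨NB r y, ?_, ?_⟩
      · unfold fam
        rw [if_pos hrv, if_neg hPv]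
        rfl
      · rintro z (h' | ⟨hcl2, hirr2, hpos2⟩ | ⟨hcl2, hr2, ha, hb⟩ | h')
        · exact h' ▸ Or.inr (Or.inr (Or.inl ⟨hcl, hrv, h1, h2⟩))
        · refine Or.inr (Or.inl ⟨clr_trans' hwt hr hcl hcl2, hirr2, ?_⟩)
          rw [hpos2, hanc]
        · refine Or.inr (Or.inr (Or.inl ⟨clr_trans' hwt hr hcl hcl2, hr2, ?_,
            lt_trans hb h2⟩))
          rw [← hanc]; exact ha
        · exact Or.inr (Or.inr (Or.inr (clr_later hwt hcl h')))
    · obtain ⟨N', hN'⟩ := fam_nonempty y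
      exact ⟨N', hN', fun z hz =>
        Or.inr (Or.inr (Or.inr (later_sub hwt hl hN' hz)))⟩
  -- Case C4 : irreflexive with a partner
  · obtain ⟨p, hqp, hpq1, rfl⟩ := hN
    have hqint : (⌈x.1.2⌉ : ℚ) = x.1.2 := x.2 ⟨hr, hpart⟩
    rcases hy with h | ⟨hcl, hrv, h1, h2⟩ | hl
    · exact absurd h hxy
    · -- interval member : reflexive with irreflexive partner x.1.1
      have hPv : ¬ Pw r y.1.1 := fun h => hr (h x.1.1 (clr_symm hcl))
      have hanc : anc y.1.2 = x.1.2 :=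
        anc_int hqint h1 (le_trans (le_of_lt h2) hpq1)
      refine ⟨NB r y, ?_, ?_⟩
      · unfold fam
        rw [if_pos hrv, if_neg hPv]
        rfl
      · rintro z (h' | ⟨hcl2, hirr2, hpos2⟩ | ⟨hcl2, hr2, ha, hb⟩ | h')
        · exact h' ▸ Or.inr (Or.inl ⟨hcl, hrv, h1, h2⟩)
        · -- the anchor of y is x itself
          have hzw : z.1.1 = x.1.1 :=
            irr_unique hwt hT0 hcl2 hirr2 (clr_symm hcl) hr
          have : z = x := by
            apply Subtype.ext
            apply Prod.ext hzw
            rw [hpos2, hanc]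
          exact Or.inl this
        · refine Or.inr (Or.inl ⟨?_, hr2, ?_, lt_trans hb h2⟩)
          · rcases clr_trans hwt hcl hcl2 with h | h
            · exact absurd (h.symm ▸ hr2) hr
            · exact h
          · rw [← hanc]; exact ha
        · exact Or.inr (Or.inr (clr_later hwt hcl h'))
    · obtain ⟨N', hN'⟩ := fam_nonempty y
      exact ⟨N', hN', fun z hz => Or.inr (Or.inr (later_sub hwt hl hN' hz))⟩
  -- Case C1 : irreflexive, no partner
  · rw [mem_singleton_iff] at hN; subst hN
    rcases hy with h | hl
    · exact absurd h hxy
    · obtain ⟨N', hN'⟩ := fam_nonempty y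
      exact ⟨N', hN', fun z hz => Or.inr (later_sub hwt hl hN' hz)⟩

/-- every generated-open set containing a point contains a canonical set around
it -/
lemma gen_nhds (hwt : ∀ w s t : W, r w s → r s t → w = t ∨ r w t)
    (hT0 : ∀ w v : W, r w v → r v w → r w w ∨ r v v) {U : Set (Xsp r)}
    (hU : TopologicalSpace.GenerateOpen {N | ∃ x, N ∈ fam r x} U) :
    ∀ x ∈ U, ∃ N ∈ fam r x, N ⊆ U := by
  induction hU with
  | basic N hN =>
      intro x hx
      obtain ⟨x', hx'⟩ := hN
      exact regularity hwt hT0 hx' x hx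
  | univ =>
      intro x _
      obtain ⟨N, hN⟩ := fam_nonempty x
      exact ⟨N, hN, subset_univ _⟩
  | inter s t hs ht ihs iht =>
      intro x hx
      obtain ⟨N1, hN1, hN1s⟩ := ihs x hx.1
      obtain ⟨N2, hN2, hN2t⟩ := iht x hx.2
      obtain ⟨N3, hN3, hsub⟩ := fam_directed hN1 hN2
      exact ⟨N3, hN3, fun z hz => ⟨hN1s (hsub hz).1, hN2t (hsub hz).2⟩⟩
  | sUnion S hS ih =>
      intro x hx
      obtain ⟨s, hsS, hxs⟩ := hx
      obtain ⟨N, hN, hNs⟩ := ih s hsS x hxs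
      exact ⟨N, hN, fun z hz => ⟨s, hsS, hNs hz⟩⟩

/-- members other than the center are r-successors of the center's fiber -/
lemma up {x y : Xsp r} {N : Set (Xsp r)} (hN : N ∈ fam r x) (hy : y ∈ N)
    (hne : y ≠ x) : r x.1.1 y.1.1 := by
  rcases mem_shape hN hy with h | h | h
  · exact absurd h hne
  · exact h.1
  · exact h.1

/-- every canonical set meets every required fiber -/
lemma meet (hT0 : ∀ w v : W, r w v → r v w → r w w ∨ r v v) {x : Xsp r} {N : Set (Xsp r)} (hN : N ∈ fam r x) {v : W}
    (hrv : r x.1.1 v) : ∃ y ∈ N, y ≠ x ∧ y.1.1 = v := by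
  unfold fam at hN
  split_ifs at hN with hr hP hpart
  -- C2
  · obtain ⟨p, hp, rfl⟩ := hN
    by_cases hvw : r v x.1.1
    · have hcl : clr r x.1.1 v := ⟨hrv, hvw⟩
      have hvv : r v v := hP v hcl
      obtain ⟨t, ht1, ht2⟩ := exists_between hp
      refine ⟨mkR v t hvv, Or.inr (Or.inl ⟨hcl, ht1, ht2⟩), ?_, rfl⟩
      intro h
      have : t = x.1.2 := congrArg (fun z => z.1.2) h
      exact absurd this (ne_of_lt ht2)
    · refine ⟨mk0 v, Or.inr (Or.inr ⟨hrv, hvw⟩), ?_, rfl⟩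
      intro h
      have hv : v = x.1.1 := congrArg (fun z => z.1.1) h
      exact hvw (by rw [hv]; exact hr)
  -- C3
  · rw [mem_singleton_iff] at hN; subst hN
    by_cases hvw : r v x.1.1
    · have hcl : clr r x.1.1 v := ⟨hrv, hvw⟩
      by_cases hvv : r v v
      · obtain ⟨t, ht1, ht2⟩ := exists_between (anc_lt x.1.2)
        refine ⟨mkR v t hvv, Or.inr (Or.inr (Or.inl ⟨hcl, hvv, ht1, ht2⟩)), ?_, rfl⟩
        intro h
        have : t = x.1.2 := congrArg (fun z => z.1.2) h
        exact absurd this (ne_of_lt ht2)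
      · refine ⟨mkA v x.1.2, Or.inr (Or.inl ⟨hcl, hvv, rfl⟩), ?_, rfl⟩
        intro h
        have : anc x.1.2 = x.1.2 := congrArg (fun z => z.1.2) h
        exact absurd this (ne_of_lt (anc_lt _))
    · refine ⟨mk0 v, Or.inr (Or.inr (Or.inr ⟨hrv, hvw⟩)), ?_, rfl⟩
      intro h
      have hv : v = x.1.1 := congrArg (fun z => z.1.1) h
      exact hvw (by rw [hv]; exact hr)
  -- C4
  · obtain ⟨p, hqp, hpq1, rfl⟩ := hN
    by_cases hvw : r v x.1.1
    · have hvv : r v v := by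
        rcases hT0 x.1.1 v hrv hvw with h | h
        · exact absurd h hr
        · exact h
      obtain ⟨t, ht1, ht2⟩ := exists_between hqp
      refine ⟨mkR v t hvv, Or.inr (Or.inl ⟨⟨hrv, hvw⟩, hvv, ht1, ht2⟩), ?_, rfl⟩
      intro h
      have : t = x.1.2 := congrArg (fun z => z.1.2) h
      exact absurd this.symm (ne_of_lt ht1)
    · refine ⟨mk0 v, Or.inr (Or.inr ⟨hrv, hvw⟩), ?_, rfl⟩
      intro h
      have hv : v = x.1.1 := congrArg (fun z => z.1.1) h
      exact hr (hv ▸ hrv)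
  -- C1
  · rw [mem_singleton_iff] at hN; subst hN
    have hvw : ¬ r v x.1.1 := by
      intro hvw
      exact hpart ⟨v, hrv, hvw⟩
    refine ⟨mk0 v, Or.inr ⟨hrv, hvw⟩, ?_, rfl⟩
    intro h
    have hv : v = x.1.1 := congrArg (fun z => z.1.1) h
    exact hr (hv ▸ hrv)

/-- if a point lies in all canonical sets of x, it is later or a smaller-coordinate
cluster partner -/
lemma all_mem_shape {x y : Xsp r} (hne : y ≠ x) (hx : ∀ N ∈ fam r x, y ∈ N) :
    later r x.1.1 y.1.1 ∨ (clr r x.1.1 y.1.1 ∧ y.1.2 < x.1.2) := by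
  unfold fam at hx
  by_cases hr : r x.1.1 x.1.1
  · by_cases hP : Pw r x.1.1
    · simp only [if_pos hr, if_pos hP] at hx
      left
      by_cases ht : y.1.2 < x.1.2
      · have := hx (NA r x y.1.2) ⟨y.1.2, ht, rfl⟩
        rcases this with h | h | h
        · exact absurd h hne
        · exact absurd h.2.1 (lt_irrefl _)
        · exact h
      · have := hx (NA r x (x.1.2 - 1)) ⟨x.1.2 - 1, by linarith, rfl⟩
        rcases this with h | h | h
        · exact absurd h hne
        · exact absurd h.2.2 ht
        · exact h
    · simp only [if_pos hr, if_neg hP] at hx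
      have := hx (NB r x) rfl
      rcases this with h | h | h | h
      · exact absurd h hne
      · exact Or.inr ⟨h.1, h.2.2 ▸ anc_lt _⟩
      · exact Or.inr ⟨h.1, h.2.2.2⟩
      · exact Or.inl h
  · by_cases hpart : ∃ v, clr r x.1.1 v
    · simp only [if_neg hr, if_pos hpart] at hx
      left
      by_cases ht : x.1.2 < y.1.2
      · have := hx (NC r x (min y.1.2 (x.1.2 + 1)))
          ⟨min y.1.2 (x.1.2 + 1), lt_min ht (by linarith), min_le_right _ _, rfl⟩
        rcases this with h | h | h
        · exact absurd h hne
        · exact absurd (lt_of_lt_of_le h.2.2.2 (min_le_left _ _)) (lt_irrefl _)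
        · exact h
      · have := hx (NC r x (x.1.2 + 1)) ⟨x.1.2 + 1, by linarith, le_refl _, rfl⟩
        rcases this with h | h | h
        · exact absurd h hne
        · exact absurd h.2.2.1 ht
        · exact h
    · simp only [if_neg hr, if_neg hpart] at hx
      have := hx (ND r x) rfl
      rcases this with h | h
      · exact absurd h hne
      · exact Or.inl h

/-- separation -/
lemma sep {x y : Xsp r} (hne : y ≠ x) (hx : ∀ N ∈ fam r x, y ∈ N)
    (hy : ∀ N ∈ fam r y, x ∈ N) : False := by
  rcases all_mem_shape hne hx with h1 | h1 <;>
    rcases all_mem_shape (Ne.symm hne) hy with h2 | h2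
  · exact h1.2 h2.1
  · exact h1.2 h2.1.1
  · exact h2.2 h1.1.1
  · exact absurd (lt_trans h1.2 h2.2) (lt_irrefl _)

end Lemmas

end WK4T0Proof

open WK4T0Proof in
theorem exists_T0_dmorphism_onto_wK4T0_frame {W : Type u} (r : W → W → Prop)
    (hwt : ∀ w s t : W, r w s → r s t → w = t ∨ r w t)
    (hT0 : ∀ w v : W, r w v → r v w → r w w ∨ r v v) :
    ∃ (X : Type u) (t : TopologicalSpace X) (π : X → W),
      @T0Space X t ∧
      Function.Surjective π ∧
      ∀ A : Set W,
        @derivedSet X t (π ⁻¹' A) = π ⁻¹' {w | ∃ v, r w v ∧ v ∈ A} := by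
  classical
  letI ts : TopologicalSpace (Xsp r) :=
    TopologicalSpace.generateFrom {N | ∃ x, N ∈ fam r x}
  have hopen : ∀ (x : Xsp r), ∀ N ∈ fam r x, IsOpen N := fun x N hN =>
    TopologicalSpace.isOpen_generateFrom_of_mem ⟨x, hN⟩
  refine ⟨Xsp r, ts, fun x => x.1.1, ?_, ?_, ?_⟩
  · -- T0
    rw [t0Space_iff_inseparable]
    intro a b hab
    by_contra hne
    have h1 : ∀ N ∈ fam r a, b ∈ N := fun N hN =>
      (inseparable_iff_forall_isOpen.1 hab N (hopen a N hN)).1 (x_mem hN)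
    have h2 : ∀ N ∈ fam r b, a ∈ N := fun N hN =>
      (inseparable_iff_forall_isOpen.1 hab N (hopen b N hN)).2 (x_mem hN)
    exact sep (Ne.symm hne) h1 h2
  · -- surjective
    intro w
    exact ⟨mk0 w, rfl⟩
  · -- derived set condition
    intro A
    ext x
    rw [mem_derivedSet, accPt_iff_nhds]
    constructor
    · intro h
      obtain ⟨N, hN⟩ := fam_nonempty x
      obtain ⟨y, ⟨hyN, hyA⟩, hyne⟩ :=
        h N ((hopen x N hN).mem_nhds_iff.2 (x_mem hN))
      exact ⟨y.1.1, up hN hyN hyne, hyA⟩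
    · rintro ⟨v, hrv, hvA⟩ U hU
      rw [mem_nhds_iff] at hU
      obtain ⟨V, hVU, hVopen, hxV⟩ := hU
      obtain ⟨N, hNf, hNV⟩ := gen_nhds hwt hT0 hVopen x hxV
      obtain ⟨y, hyN, hyne, hyfib⟩ := meet hT0 hNf hrv
      refine ⟨y, ⟨hVU (hNV hyN), ?_⟩, hyne⟩
      show y.1.1 ∈ A
      rw [hyfib]
      exact hvA
end

section
/- Let r be a transitive relation on a set W. Then there exist a type X, a topology on X that is T_D (i.e., for every x ∈ X there exists an open set U with U ∩ closure {x} = {x}), and a surjective map π : X → W such that for every A ⊆ W, derivedSet (π ⁻¹' A) = π ⁻¹' {w | ∃ v, r w v ∧ v ∈ A}. -/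
universe u

namespace TDdmorphAux

variable {W : Type u}

/-- Basic neighborhood of a point `p` in `W × ℕ`. -/
def nbhd (r : W → W → Prop) (p : W × ℕ) (m : ℕ) : Set (W × ℕ) :=
  insert p {q | r p.1 q.1 ∧ m ≤ q.2}

/-- The topology on `W × ℕ`. -/
def tdTop (r : W → W → Prop) : TopologicalSpace (W × ℕ) where
  IsOpen S := ∀ p ∈ S, ∃ m, nbhd r p m ⊆ S
  isOpen_univ := fun p _ => ⟨0, fun _ _ => trivial⟩
  isOpen_inter := by
    intro S T hS hT p hp
    obtain ⟨m, hm⟩ := hS p hp.1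
    obtain ⟨n, hn⟩ := hT p hp.2
    refine ⟨max m n, fun q hq => ?_⟩
    rcases hq with h | ⟨h1, h2⟩
    · exact h ▸ hp
    · exact ⟨hm (Or.inr ⟨h1, le_trans (le_max_left _ _) h2⟩),
        hn (Or.inr ⟨h1, le_trans (le_max_right _ _) h2⟩)⟩
  isOpen_sUnion := by
    intro 𝒮 h p hp
    obtain ⟨S, hS, hpS⟩ := hp
    obtain ⟨m, hm⟩ := h S hS p hpS
    exact ⟨m, fun q hq => ⟨S, hS, hm hq⟩⟩

variable {r : W → W → Prop}

lemma isOpen_nbhd (htrans : ∀ w s t : W, r w s → r s t → r w t)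
    (p : W × ℕ) (m : ℕ) : @IsOpen _ (tdTop r) (nbhd r p m) := by
  intro q hq
  rcases hq with h | ⟨h1, h2⟩
  · subst h; exact ⟨m, fun _ h => h⟩
  · refine ⟨m, fun u hu => ?_⟩
    rcases hu with h | ⟨h3, h4⟩
    · exact h ▸ Or.inr ⟨h1, h2⟩
    · exact Or.inr ⟨htrans _ _ _ h1 h3, h4⟩

lemma mem_closure_iff' (htrans : ∀ w s t : W, r w s → r s t → r w t)
    (S : Set (W × ℕ)) (p : W × ℕ) :
    p ∈ @closure _ (tdTop r) S ↔ ∀ m, (nbhd r p m ∩ S).Nonempty := by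
  rw [@mem_closure_iff _ (tdTop r) p S]
  constructor
  · intro h m
    exact h _ (isOpen_nbhd htrans p m) (Or.inl rfl)
  · intro h V hV hpV
    obtain ⟨m, hm⟩ := hV p hpV
    obtain ⟨q, hq1, hq2⟩ := h m
    exact ⟨q, hm hq1, hq2⟩

lemma mem_nhds_iff' (htrans : ∀ w s t : W, r w s → r s t → r w t)
    (U : Set (W × ℕ)) (p : W × ℕ) :
    U ∈ @nhds _ (tdTop r) p ↔ ∃ m, nbhd r p m ⊆ U := by
  rw [@mem_nhds_iff _ (tdTop r) p U]
  constructor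
  · rintro ⟨V, hVU, hV, hpV⟩
    obtain ⟨m, hm⟩ := hV p hpV
    exact ⟨m, hm.trans hVU⟩
  · rintro ⟨m, hm⟩
    exact ⟨nbhd r p m, hm, isOpen_nbhd htrans p m, Or.inl rfl⟩

lemma mem_derivedSet_iff (htrans : ∀ w s t : W, r w s → r s t → r w t)
    (S : Set (W × ℕ)) (x : W × ℕ) :
    x ∈ @derivedSet _ (tdTop r) S ↔ ∀ m, ∃ q ∈ nbhd r x m ∩ S, q ≠ x := by
  rw [@mem_derivedSet _ (tdTop r), @accPt_iff_nhds _ (tdTop r) x S]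
  constructor
  · intro h m
    exact h _ ((mem_nhds_iff' htrans _ x).mpr ⟨m, le_refl _⟩)
  · intro h U hU
    obtain ⟨m, hm⟩ := (mem_nhds_iff' htrans U x).mp hU
    obtain ⟨q, ⟨hq1, hq2⟩, hq3⟩ := h m
    exact ⟨q, ⟨hm hq1, hq2⟩, hq3⟩

end TDdmorphAux

theorem exists_TD_dmorphism_onto_K4_frame {W : Type u} (r : W → W → Prop)
    (htrans : ∀ w s t : W, r w s → r s t → r w t) :
    ∃ (X : Type u) (t : TopologicalSpace X) (π : X → W),
      (∀ x : X, ∃ U : Set X, @IsOpen X t U ∧ U ∩ @closure X t {x} = {x}) ∧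
      Function.Surjective π ∧
      ∀ A : Set W,
        @derivedSet X t (π ⁻¹' A) = π ⁻¹' {w | ∃ v, r w v ∧ v ∈ A} := by
  classical
  open TDdmorphAux in
  refine ⟨W × ℕ, tdTop r, Prod.fst, ?_, ?_, ?_⟩
  · -- T_D
    intro x
    refine ⟨nbhd r x (x.2 + 1), isOpen_nbhd htrans x (x.2 + 1), ?_⟩
    apply Set.Subset.antisymm
    · rintro q ⟨hq1, hq2⟩
      rcases hq1 with h | ⟨h1, h2⟩
      · exact h ▸ rfl
      · -- q ≠ x, derive contradiction from q ∈ closure {x}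
        rw [mem_closure_iff' htrans] at hq2
        obtain ⟨u, hu1, hu2⟩ := hq2 (x.2 + 1)
        rw [Set.mem_singleton_iff] at hu2
        subst hu2
        rcases hu1 with h | ⟨_, h4⟩
        · exact h.symm
        · exact absurd h4 (by omega)
    · rintro q hq
      rw [Set.mem_singleton_iff] at hq
      subst hq
      exact ⟨Or.inl rfl, @subset_closure _ (tdTop r) {q} q rfl⟩
  · exact fun w => ⟨(w, 0), rfl⟩
  · intro A
    ext x
    rw [mem_derivedSet_iff htrans]
    simp only [Set.mem_preimage, Set.mem_setOf_eq]
    constructor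
    · intro h
      obtain ⟨q, ⟨hq1, hqA⟩, hqx⟩ := h (x.2 + 1)
      rcases hq1 with h' | ⟨h1, h2⟩
      · exact absurd h' hqx
      · exact ⟨q.1, h1, hqA⟩
    · rintro ⟨v, hrv, hvA⟩ m
      refine ⟨(v, max m (x.2 + 1)), ⟨Or.inr ⟨hrv, le_max_left _ _⟩, hvA⟩, ?_⟩
      intro h
      have : ((v, max m (x.2 + 1)) : W × ℕ).2 = x.2 := congrArg Prod.snd h
      simp at this
      omega
end

section
/- Consider the spine frame: let W = ℕ ⊕ Fin 3, where Sum.inl n represents the finite ordinal n and Sum.inr k represents ω + k (k = 0, 1, 2); order W by: inl n < inl m iff n < m; inl n < inr k for all n, k; inr j < inr k iff j < k as elements of Fin 3. Call a point reflexive if it equals inl n with n odd or equals inr 1. Define a → b to hold iff b < a, or (a = b and a is reflexive), or (a = inr 1 and b = inr 2). Then → is weakly transitive and satisfies the wK4T₀ condition: for all a, b, if a → b and b → a then a → a or b → b. -/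
/-- The underlying order of the spine frame on `ℕ ⊕ Fin 3`:
`inl n` represents the finite ordinal `n`, and `inr k` represents `ω + k`. -/
def spineLt : (ℕ ⊕ Fin 3) → (ℕ ⊕ Fin 3) → Prop
  | Sum.inl n, Sum.inl m => n < m
  | Sum.inl _, Sum.inr _ => True
  | Sum.inr _, Sum.inl _ => False
  | Sum.inr j, Sum.inr k => j < k

/-- A point of the spine frame is reflexive iff it is an odd finite ordinal or `ω + 1`. -/
def spineRefl : (ℕ ⊕ Fin 3) → Prop
  | Sum.inl n => Odd n
  | Sum.inr k => k = 1

/-- The accessibility relation of the spine frame. -/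
def spineR (a b : ℕ ⊕ Fin 3) : Prop :=
  spineLt b a ∨ (a = b ∧ spineRefl a) ∨ (a = Sum.inr 1 ∧ b = Sum.inr 2)

theorem spineR_weakly_transitive_and_wK4T0 :
    (∀ w s t : ℕ ⊕ Fin 3, spineR w s → spineR s t → w = t ∨ spineR w t) ∧
    (∀ a b : ℕ ⊕ Fin 3, spineR a b → spineR b a → spineR a a ∨ spineR b b) := by
  constructor
  · rintro (w|w) (s|s) (t|t) h1 h2 <;>
      (try fin_cases w) <;> (try fin_cases s) <;> (try fin_cases t) <;>
      simp_all [spineR, spineLt, spineRefl, Nat.odd_iff] <;> omega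
  · rintro (a|a) (b|b) h1 h2 <;>
      (try fin_cases a) <;> (try fin_cases b) <;>
      simp_all [spineR, spineLt, spineRefl, Nat.odd_iff] <;> omega
end

section
/- Consider the spine frame: let W = ℕ ⊕ Fin 3, where Sum.inl n represents the finite ordinal n and Sum.inr k represents ω + k (k = 0, 1, 2); order W by: inl n < inl m iff n < m; inl n < inr k for all n, k; inr j < inr k iff j < k as elements of Fin 3. Call a point reflexive if it equals inl n with n odd or equals inr 1, and define a → b to hold iff b < a, or (a = b and a is reflexive), or (a = inr 1 and b = inr 2). Let P = {inl n | n odd} ∪ {inr 1}, and let a →* b mean a = b or a → b. Define F : Set W → Set W by F(Y) = {a | (∃ b, a →* b ∧ b ∈ Y ∧ b ∈ P) ∧ (∃ b, a →* b ∧ b ∈ Y ∧ b ∉ P)}. Then the greatest fixed point of F, i.e. the union ⋃₀ {Y | Y ⊆ F Y} of all postfixed points of F, equals {Sum.inr 1, Sum.inr 2}. -/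
/-- The reflexive closure of the spine accessibility relation. -/
def spineRStar (a b : ℕ ⊕ Fin 3) : Prop := a = b ∨ spineR a b

/-- The valuation of the propositional variable `p` in the spine model. -/
def spineP : Set (ℕ ⊕ Fin 3) :=
  {a | (∃ n, a = Sum.inl n ∧ Odd n) ∨ a = Sum.inr 1}

/-- The one-step operator of the tangled closure `⟨*⟩∞ {p, ¬p}`. -/
def spineF (Y : Set (ℕ ⊕ Fin 3)) : Set (ℕ ⊕ Fin 3) :=
  {a | (∃ b, spineRStar a b ∧ b ∈ Y ∧ b ∈ spineP) ∧
       (∃ b, spineRStar a b ∧ b ∈ Y ∧ b ∉ spineP)}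

lemma spine_star_inl {n : ℕ} {x : ℕ ⊕ Fin 3} (h : spineRStar (Sum.inl n) x) :
    ∃ m, m ≤ n ∧ x = Sum.inl m := by
  rcases h with h | h | ⟨h, _⟩ | ⟨h, _⟩
  · exact ⟨n, le_refl n, h.symm⟩
  · cases x with
    | inl m => exact ⟨m, le_of_lt h, rfl⟩
    | inr k => exact absurd h (by simp [spineLt])
  · exact ⟨n, le_refl n, h.symm⟩
  · simp at h

lemma spine_no_inl {Y : Set (ℕ ⊕ Fin 3)} (hY : Y ⊆ spineF Y) :
    ∀ n, Sum.inl n ∉ Y := by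
  intro n
  induction n using Nat.strong_induction_on with
  | _ n ih =>
    intro hn
    obtain ⟨⟨b, hb, hbY, hbP⟩, ⟨c, hc, hcY, hcP⟩⟩ := hY hn
    obtain ⟨mb, hmb, rfl⟩ := spine_star_inl hb
    obtain ⟨mc, hmc, rfl⟩ := spine_star_inl hc
    have hob : Odd mb := by
      rcases hbP with ⟨k, hk, hok⟩ | h
      · cases hk; exact hok
      · simp at h
    have hoc : ¬ Odd mc := fun h => hcP (Or.inl ⟨mc, rfl, h⟩)
    rcases lt_or_eq_of_le hmb with h | rfl
    · exact ih mb h hbY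
    rcases lt_or_eq_of_le hmc with h | rfl
    · exact ih mc h hcY
    exact hoc hob

theorem gfp_tangled_closure_eq_top_cluster :
    ⋃₀ {Y : Set (ℕ ⊕ Fin 3) | Y ⊆ spineF Y} = {Sum.inr 1, Sum.inr 2} := by
  apply Set.Subset.antisymm
  · rintro a ⟨Y, hY, haY⟩
    simp only [Set.mem_setOf_eq] at hY
    cases a with
    | inl n => exact absurd haY (spine_no_inl hY n)
    | inr k =>
      fin_cases k
      · -- inr 0 ∈ Y : contradiction
        exfalso
        obtain ⟨⟨b, hb, hbY, hbP⟩, _⟩ := hY haY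
        rcases hb with rfl | h | ⟨rfl, h⟩ | ⟨h, _⟩
        · rcases hbP with ⟨k, hk, _⟩ | h <;> simp_all
        · cases b with
          | inl m => exact spine_no_inl hY m hbY
          | inr j =>
            exact absurd h (Nat.not_lt_zero j.val)
        · rcases hbP with ⟨k, hk, _⟩ | h <;> simp_all
        · simp at h
      · left; rfl
      · right; rfl
  · rintro a (rfl | rfl)
    · refine ⟨{Sum.inr 1, Sum.inr 2}, ?_, Or.inl rfl⟩
      · rintro x (rfl | rfl)
        · exact ⟨⟨Sum.inr 1, Or.inl rfl, Or.inl rfl, Or.inr rfl⟩,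
            ⟨Sum.inr 2, Or.inr (Or.inr (Or.inr ⟨rfl, rfl⟩)), Or.inr rfl,
              by rintro (⟨k, hk, _⟩ | h) <;> simp_all⟩⟩
        · exact ⟨⟨Sum.inr 1, Or.inr (Or.inl (by unfold spineLt; decide)), Or.inl rfl, Or.inr rfl⟩,
            ⟨Sum.inr 2, Or.inl rfl, Or.inr rfl,
              by rintro (⟨k, hk, _⟩ | h) <;> simp_all⟩⟩
    · refine ⟨{Sum.inr 1, Sum.inr 2}, ?_, Or.inr rfl⟩
      rintro x (rfl | rfl)
      · exact ⟨⟨Sum.inr 1, Or.inl rfl, Or.inl rfl, Or.inr rfl⟩,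
          ⟨Sum.inr 2, Or.inr (Or.inr (Or.inr ⟨rfl, rfl⟩)), Or.inr rfl,
            by rintro (⟨k, hk, _⟩ | h) <;> simp_all⟩⟩
      · exact ⟨⟨Sum.inr 1, Or.inr (Or.inl (by unfold spineLt; decide)), Or.inl rfl, Or.inr rfl⟩,
          ⟨Sum.inr 2, Or.inl rfl, Or.inr rfl,
            by rintro (⟨k, hk, _⟩ | h) <;> simp_all⟩⟩
end
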